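/- (Dyson's theorem) If a function f : ℕ → ℕ is strongly representable in an arbitrary theory T, then f is provably total in T; specifically, if θ strongly represents f, then η(x, y) := [∃!z θ(x,z) ∧ θ(x,y)] ∨ [¬∃!z θ(x,z) ∧ y = 0] witnesses provable totality. -/

import Mathlib

open FirstOrder Language

/-- Function symbols of our arithmetical language: `0` and successor `S`
(so that every natural number `n` has a numeral `n̄ = Sⁿ0`). -/
inductive ArFunc : ℕ → Type
  | zero : ArFunc 0
  | succ : ArFunc 1

/-- Relation symbols of our arithmetical language: `<` and `≤`. -/
inductive ArRel : ℕ → Type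
  | lt : ArRel 2
  | le : ArRel 2

/-- The first-order language `⟨0, S, <, ≤⟩`. -/
def Lar : Language := ⟨ArFunc, ArRel⟩

/-- The numeral `n̄ = Sⁿ0`. -/
def num {α : Type} : ℕ → Lar.Term α
  | 0 => Term.func ArFunc.zero ![]
  | n + 1 => Term.func ArFunc.succ ![num n]

/-- The formula `t < s`. -/
def ltF {α : Type} (t s : Lar.Term α) : Lar.Formula α :=
  Relations.formula₂ ArRel.lt t s

/-- The formula `t ≤ s`. -/
def leF {α : Type} (t s : Lar.Term α) : Lar.Formula α :=
  Relations.formula₂ ArRel.le t s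

/-- Universal quantification of a formula in one variable, as a sentence `∀ y, φ(y)`. -/
noncomputable def allS (φ : Lar.Formula (Fin 1)) : Lar.Sentence :=
  Formula.iAlls (Fin 1) (φ.relabel (fun _ : Fin 1 => (Sum.inr 0 : Empty ⊕ Fin 1)))

/-- The finite disjunction `y = 0̄ ∨ y = 1̄ ∨ ⋯ ∨ y = n̄` (in the free variable `y`). -/
def eqDisj : ℕ → Lar.Formula (Fin 1)
  | 0 => Term.equal (Term.var 0) (num 0)
  | n + 1 => eqDisj n ⊔ Term.equal (Term.var 0) (num (n + 1))

/-- `T` proves `θ(n̄, y) ∧ θ(n̄, z) → y = z` universally, i.e. the sentence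
`∀ y z (θ(n̄, y) ∧ θ(n̄, z) → y = z)`. -/
noncomputable def uniqueSent (θ : Lar.Formula (Fin 2)) (n : ℕ) : Lar.Sentence :=
  Formula.iAlls (Fin 2) (Formula.relabel (fun i : Fin 2 => (Sum.inr i : Empty ⊕ Fin 2))
    (Formula.imp ((θ.subst ![num n, Term.var 0]) ⊓ (θ.subst ![num n, Term.var 1]))
      (Term.equal (Term.var 0) (Term.var 1))))

/-- The sentence `φ(n̄, m̄)`: substitute the numerals `n̄, m̄` for the two free variables. -/
def substS (φ : Lar.Formula (Fin 2)) (n m : ℕ) : Lar.Sentence :=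
  φ.subst ![num n, num m]

/-- The formula `∃! z, θ(x, z)`, i.e. `∃ z (θ(x, z) ∧ ∀ v (θ(x, v) → v = z))`,
in the single free variable `x`. -/
noncomputable def exUniq (θ : Lar.Formula (Fin 2)) : Lar.Formula (Fin 1) :=
  Formula.iExs (Fin 1) (Formula.relabel (![Sum.inl 0, Sum.inr 0] : Fin 2 → Fin 1 ⊕ Fin 1)
    (θ ⊓ Formula.iAlls (Fin 1) (Formula.relabel
      (![Sum.inl 0, Sum.inl 1, Sum.inr 0] : Fin 3 → Fin 2 ⊕ Fin 1)
      (Formula.imp (θ.relabel ![0, 2]) (Term.equal (Term.var 2) (Term.var 1))))))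

/-- Dyson's formula `η(x, y) := [∃!z θ(x,z) ∧ θ(x,y)] ∨ [¬∃!z θ(x,z) ∧ y = 0̄]`. -/
noncomputable def dysonEta (θ : Lar.Formula (Fin 2)) : Lar.Formula (Fin 2) :=
  (((exUniq θ).relabel ![0]) ⊓ θ) ⊔
    ((Formula.not ((exUniq θ).relabel ![0])) ⊓ Term.equal (Term.var 1) (num 0))

/-- The sentence `∀ x ∃ y (η(x, y) ∧ ∀ z (η(x, z) → y = z))`. -/
noncomputable def provTotalSent (η : Lar.Formula (Fin 2)) : Lar.Sentence :=
  allS (Formula.iExs (Fin 1) (Formula.relabel (![Sum.inl 0, Sum.inr 0] : Fin 2 → Fin 1 ⊕ Fin 1)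
    (η ⊓ Formula.iAlls (Fin 1) (Formula.relabel
      (![Sum.inl 0, Sum.inl 1, Sum.inr 0] : Fin 3 → Fin 2 ⊕ Fin 1)
      (Formula.imp (η.relabel ![0, 2]) (Term.equal (Term.var 1) (Term.var 2)))))))


section Helpers

variable {M : Type*} [Lar.Structure M]

/-- Value of the numeral `n̄` in a structure `M`. -/
noncomputable def numv (M : Type*) [Lar.Structure M] (n : ℕ) : M :=
  (num (α := Empty) n).realize Empty.elim

lemma realize_num {α : Type} (v : α → M) (n : ℕ) :
    (num n).realize v = numv M n := by
  induction n with
  | zero =>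
      simp only [num, numv, Term.realize]
      congr! with i
  | succ n ih =>
      simp only [num, numv, Term.realize] at *
      congr! with i
      fin_cases i
      simpa using ih

omit [Lar.Structure M] in
lemma vecext {v w : Fin 2 → M} (h0 : v 0 = w 0) (h1 : v 1 = w 1) : v = w :=
  funext fun a => by fin_cases a <;> assumption

lemma realize2 (φ : Lar.Formula (Fin 2)) {v w : Fin 2 → M}
    (h0 : v 0 = w 0) (h1 : v 1 = w 1) (h : φ.Realize v) : φ.Realize w := by
  rwa [vecext h0 h1] at h

lemma frealize_subst {α : Type} (φ : Lar.Formula (Fin 2)) (tf : Fin 2 → Lar.Term α)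
    (v : α → M) :
    Formula.Realize (φ.subst tf) v ↔ φ.Realize (fun a => (tf a).realize v) :=
  BoundedFormula.realize_subst

lemma realize_exUniq (θ : Lar.Formula (Fin 2)) (w : Fin 1 → M) :
    (exUniq θ).Realize w ↔ ∃! z, θ.Realize ![w 0, z] := by
  simp only [exUniq, Formula.realize_iExs, Formula.realize_inf, Formula.realize_iAlls,
    Formula.realize_imp, Formula.realize_equal, Formula.realize_relabel, Term.realize_var]
  constructor
  · rintro ⟨i, h, hu⟩
    refine ⟨i 0, realize2 θ (by simp) (by simp) h, fun z hz => ?_⟩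
    have := hu ![z] (realize2 θ (by simp) (by simp) hz)
    simpa using this
  · rintro ⟨z, hz, hu⟩
    refine ⟨![z], realize2 θ (by simp) (by simp) hz, fun i hi => ?_⟩
    have := hu (i 0) (realize2 θ (by simp) (by simp) hi)
    simpa using this

lemma realize_substS (φ : Lar.Formula (Fin 2)) (n m : ℕ) (v : Empty → M) :
    Formula.Realize (substS φ n m) v ↔ φ.Realize ![numv M n, numv M m] := by
  have h : Formula.Realize (substS φ n m) v ↔
      φ.Realize (fun a => ((![num n, num m] : Fin 2 → Lar.Term Empty) a).realize v) :=
    BoundedFormula.realize_subst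
  rw [h]
  constructor
  · exact realize2 φ (by simp [realize_num]) (by simp [realize_num])
  · exact realize2 φ (by simp [realize_num]) (by simp [realize_num])

lemma realize_uniqueSent (θ : Lar.Formula (Fin 2)) (n : ℕ) (v : Empty → M) :
    Formula.Realize (uniqueSent θ n) v ↔
      ∀ y z : M, θ.Realize ![numv M n, y] → θ.Realize ![numv M n, z] → y = z := by
  simp only [uniqueSent, Formula.realize_iAlls, Formula.realize_relabel, Formula.realize_imp, Formula.realize_inf,
    Formula.realize_equal, Term.realize_var, frealize_subst]
  constructor
  · intro h y z hy hz
    have := h ![y, z] ⟨realize2 θ (by simp [realize_num]) (by simp [realize_num]) hy,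
      realize2 θ (by simp [realize_num]) (by simp [realize_num]) hz⟩
    simpa using this
  · rintro h i ⟨h0, h1⟩
    have := h (i 0) (i 1)
      (realize2 θ (by simp [realize_num]) (by simp [realize_num]) h0)
      (realize2 θ (by simp [realize_num]) (by simp [realize_num]) h1)
    simpa using this

lemma realize_dysonEta (θ : Lar.Formula (Fin 2)) (v : Fin 2 → M) :
    (dysonEta θ).Realize v ↔
      ((∃! z, θ.Realize ![v 0, z]) ∧ θ.Realize v) ∨
        (¬ (∃! z, θ.Realize ![v 0, z]) ∧ v 1 = numv M 0) := by
  have hre : ((exUniq θ).relabel ![0]).Realize v ↔ ∃! z, θ.Realize ![v 0, z] := by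
    rw [Formula.realize_relabel, realize_exUniq]
    simp
  simp only [dysonEta, Formula.realize_sup, Formula.realize_inf, Formula.realize_not,
    Formula.realize_equal, Term.realize_var, hre, realize_num]

lemma realize_provTotalSent (η : Lar.Formula (Fin 2)) (v : Empty → M) :
    Formula.Realize (provTotalSent η) v ↔
      ∀ x : M, ∃ y : M, η.Realize ![x, y] ∧ ∀ z : M, η.Realize ![x, z] → y = z := by
  simp only [provTotalSent, allS, Formula.realize_iAlls, Formula.realize_iExs,
    Formula.realize_inf, Formula.realize_imp, Formula.realize_equal, Formula.realize_relabel,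
    Term.realize_var]
  constructor
  · intro h x
    obtain ⟨i, hi, hu⟩ := h ![x]
    refine ⟨i 0, realize2 η (by simp) (by simp) hi, fun z hz => ?_⟩
    have := hu ![z] (realize2 η (by simp) (by simp) hz)
    simpa using this
  · intro h i
    obtain ⟨y, hy, hu⟩ := h (i 0)
    refine ⟨![y], realize2 η (by simp) (by simp) hy, fun j hj => ?_⟩
    have := hu (j 0) (realize2 η (by simp) (by simp) hj)
    simpa using this

end Helpers

/-- (Dyson's theorem.) If `f : ℕ → ℕ` is strongly representable by `θ` in an arbitrary theory
`T` (no assumptions on `T` beyond first-order logic), then `f` is provably total in `T`,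
witnessed by `η(x, y) := [∃!z θ(x,z) ∧ θ(x,y)] ∨ [¬∃!z θ(x,z) ∧ y = 0̄]`. -/
theorem strongly_representable_implies_provably_total
    (T : Lar.Theory) (f : ℕ → ℕ) (θ : Lar.Formula (Fin 2))
    (h1 : ∀ n : ℕ, T ⊨ᵇ substS θ n (f n))
    (h2 : ∀ n : ℕ, T ⊨ᵇ uniqueSent θ n) :
    (∀ n : ℕ, T ⊨ᵇ substS (dysonEta θ) n (f n)) ∧
      T ⊨ᵇ provTotalSent (dysonEta θ) := by
  simp only [Theory.models_formula_iff] at h1 h2 ⊢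
  constructor
  · intro n M v
    rw [realize_substS, realize_dysonEta]
    left
    have hθ := (realize_substS θ n (f n) v).mp (h1 n M v)
    have hu := (realize_uniqueSent θ n v).mp (h2 n M v)
    simp only [Matrix.cons_val_zero, Matrix.cons_val_one, Matrix.head_cons]
    exact ⟨⟨numv M (f n), realize2 θ (by simp) (by simp) hθ,
      fun z hz => hu z (numv M (f n)) hz hθ⟩, hθ⟩
  · intro M v
    rw [realize_provTotalSent]
    intro x
    by_cases h : ∃! z, θ.Realize (M := M) ![x, z]
    · obtain ⟨z, hz, huz⟩ := h
      refine ⟨z, ?_, ?_⟩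
      · rw [realize_dysonEta]
        refine Or.inl ⟨?_, realize2 θ (by simp) (by simp) hz⟩
        simp only [Matrix.cons_val_zero]; exact ⟨z, hz, huz⟩
      · intro z' hz'
        rw [realize_dysonEta] at hz'
        rcases hz' with ⟨_, hθz'⟩ | ⟨hne, _⟩
        · exact (huz z' (realize2 θ (by simp) (by simp) hθz')).symm
        · exact absurd (by simp only [Matrix.cons_val_zero]; exact ⟨z, hz, huz⟩) hne
    · refine ⟨numv M 0, ?_, ?_⟩
      · rw [realize_dysonEta]
        exact Or.inr ⟨by simpa using h, by simp⟩
      · intro z' hz'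
        rw [realize_dysonEta] at hz'
        rcases hz' with ⟨hex, _⟩ | ⟨_, he⟩
        · exact absurd (by simpa using hex) h
        · simpa using he.symm
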